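/- Let ω : ℝ → ℂ be a C² function whose support is a compact subset of [0,∞), and let M > 0. There exists a constant C = C(ω, M) such that for every x ≥ 0 and every C² function φ : [0,∞) → ℂ satisfying |φ(λ)| ≤ M, |φ'(λ)| ≤ M, and |φ''(λ)| ≤ M for all λ ≥ 0, the function F(u) := ∫₀^∞ cos(uλ) e^{ixλ} ω(λ) φ(λ) dλ satisfies ∫_ℝ |F(u)| du ≤ C ⟨x⟩. -/

import Mathlib

open MeasureTheory Real Complex FourierTransform


lemma derivs_of_contDiff2 {g : ℝ → ℂ} (hg : ContDiff ℝ 2 g) :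
    Differentiable ℝ g ∧ ContDiff ℝ 1 (deriv g) := by
  rw [show (2 : WithTop ℕ∞) = 1 + 1 from rfl, contDiff_succ_iff_deriv] at hg
  exact ⟨hg.1, hg.2.2⟩

lemma norm_fourier_le (g : ℝ → ℂ) (w : ℝ) : ‖𝓕 g w‖ ≤ ∫ l, ‖g l‖ := by
  rw [Real.fourier_real_eq_integral_exp_smul]
  refine (norm_integral_le_integral_norm _).trans_eq ?_
  congr 1; funext v
  rw [norm_smul]
  simp [Complex.norm_exp]

lemma fourier_decay {g : ℝ → ℂ} (hg : ContDiff ℝ 2 g) (hc : HasCompactSupport g) (ξ : ℝ) :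
    (1 + ξ ^ 2) * ‖𝓕 g ξ‖ ≤ (∫ l, ‖g l‖) + ∫ l, ‖deriv (deriv g) l‖ := by
  obtain ⟨hd, hg1⟩ := derivs_of_contDiff2 hg
  have hgi : Integrable g := hg.continuous.integrable_of_hasCompactSupport hc
  have hd' : Differentiable ℝ (deriv g) := hg1.differentiable one_ne_zero
  have hgi' : Integrable (deriv g) :=
    (hg1.continuous).integrable_of_hasCompactSupport hc.deriv
  have hgi'' : Integrable (deriv (deriv g)) :=
    (hg1.continuous_deriv le_rfl).integrable_of_hasCompactSupport hc.deriv.deriv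
  have h1 : 𝓕 (deriv g) = fun ξ : ℝ => (2 * π * I * ξ) • (𝓕 g ξ) :=
    Real.fourier_deriv hgi hd hgi'
  have h2 : 𝓕 (deriv (deriv g)) = fun ξ : ℝ => (2 * π * I * ξ) • (𝓕 (deriv g) ξ) :=
    Real.fourier_deriv hgi' hd' hgi''
  have hb0 : ‖𝓕 g ξ‖ ≤ ∫ l, ‖g l‖ := norm_fourier_le g ξ
  have hb2 : ‖𝓕 (deriv (deriv g)) ξ‖ ≤ ∫ l, ‖deriv (deriv g) l‖ := norm_fourier_le _ ξ
  have hnc : ‖(2 * (π:ℂ) * I * (ξ:ℂ))‖ = 2 * π * |ξ| := by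
    simp [norm_mul, Complex.norm_real, Real.norm_eq_abs, abs_of_pos Real.pi_pos]
  have hnorm : ‖𝓕 (deriv (deriv g)) ξ‖ = (2 * π * |ξ|) ^ 2 * ‖𝓕 g ξ‖ := by
    rw [h2, h1]
    simp only [smul_eq_mul]
    rw [norm_mul (2 * (π:ℂ) * I * ξ) _, norm_mul (2 * (π:ℂ) * I * ξ) _, hnc]; ring
  have hsq : ξ ^ 2 * ‖𝓕 g ξ‖ ≤ ∫ l, ‖deriv (deriv g) l‖ := by
    refine le_trans ?_ (hnorm ▸ hb2)
    have h1le : ξ ^ 2 ≤ (2 * π * |ξ|) ^ 2 := by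
      have he : (2 * π * |ξ|) ^ 2 = 4 * π ^ 2 * ξ ^ 2 := by
        rw [mul_pow, mul_pow, _root_.sq_abs]; ring
      rw [he]
      have hp : (9:ℝ) ≤ π ^ 2 := by nlinarith [Real.pi_gt_three]
      nlinarith [sq_nonneg ξ, mul_nonneg (by linarith : (0:ℝ) ≤ π ^ 2 - 9) (sq_nonneg ξ)]
    exact mul_le_mul_of_nonneg_right h1le (norm_nonneg _)
  nlinarith [norm_nonneg (𝓕 g ξ)]

lemma exp_cos_split (u x l : ℝ) :
    ((Real.cos (u * l) : ℝ) : ℂ) * Complex.exp (Complex.I * (x : ℂ) * (l : ℂ)) =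
      (1/2 : ℂ) * (Complex.exp (((x + u) * l : ℝ) * Complex.I)
        + Complex.exp (((x - u) * l : ℝ) * Complex.I)) := by
  have e1 : Complex.exp (((x + u) * l : ℝ) * Complex.I)
      = Complex.exp ((u * l : ℝ) * Complex.I) * Complex.exp (Complex.I * (x:ℂ) * (l:ℂ)) := by
    rw [← Complex.exp_add]; congr 1; push_cast; ring
  have e2 : Complex.exp (((x - u) * l : ℝ) * Complex.I)
      = Complex.exp (-((u * l : ℝ):ℂ) * Complex.I) * Complex.exp (Complex.I * (x:ℂ) * (l:ℂ)) := by
    rw [← Complex.exp_add]; congr 1; push_cast; ring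
  rw [Complex.ofReal_cos, Complex.cos, e1, e2]; ring

lemma fourier_rep (g : ℝ → ℂ) (θ : ℝ) :
    ∫ v : ℝ, Complex.exp ((θ * v : ℝ) * Complex.I) * g v = 𝓕 g (-(θ / (2 * π))) := by
  rw [Real.fourier_real_eq_integral_exp_smul]
  congr 1; funext v
  rw [smul_eq_mul]
  have h : (-2) * π * v * (-(θ / (2 * π))) = θ * v := by
    field_simp
  rw [h]


/-- weighted `L¹`-bound for the cosine transform: for a compactly supported
`C²` function `ω` with support in `[0,∞)` and any `C²` function `φ` with `φ, φ', φ''`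
bounded by `M` on `[0,∞)`, the function
`F(u) = ∫₀^∞ cos(uλ) e^{ixλ} ω(λ) φ(λ) dλ` satisfies `∫ |F(u)| du ≤ C ⟨x⟩`
uniformly in `x ≥ 0`, with `C = C(ω, M)`. -/
theorem stmt_9 (ω : ℝ → ℂ) (hω : ContDiff ℝ 2 ω) (hωc : HasCompactSupport ω)
    (hωsupp : Function.support ω ⊆ Set.Ici (0 : ℝ)) (M : ℝ) (hM : 0 < M) :
    ∃ C : ℝ, ∀ x : ℝ, 0 ≤ x → ∀ φ : ℝ → ℂ, ContDiff ℝ 2 φ →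
      (∀ lam : ℝ, 0 ≤ lam →
        ‖φ lam‖ ≤ M ∧ ‖deriv φ lam‖ ≤ M ∧ ‖deriv (deriv φ) lam‖ ≤ M) →
      (∫ u : ℝ, ‖∫ lam in Set.Ioi (0 : ℝ),
          ((Real.cos (u * lam) : ℝ) : ℂ) * Complex.exp (Complex.I * (x : ℂ) * (lam : ℂ)) *
            ω lam * φ lam‖)
        ≤ C * Real.sqrt (1 + x ^ 2) := by
  obtain ⟨hωd, hω1⟩ := derivs_of_contDiff2 hω
  have hωd' : Differentiable ℝ (deriv ω) := hω1.differentiable one_ne_zero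
  have hωi : Integrable ω := hω.continuous.integrable_of_hasCompactSupport hωc
  have hω'i : Integrable (deriv ω) :=
    hω1.continuous.integrable_of_hasCompactSupport hωc.deriv
  have hω''i : Integrable (deriv (deriv ω)) :=
    (hω1.continuous_deriv le_rfl).integrable_of_hasCompactSupport hωc.deriv.deriv
  set a0 : ℝ := ∫ l, ‖ω l‖ with ha0
  set a1 : ℝ := ∫ l, ‖deriv ω l‖ with ha1
  set a2 : ℝ := ∫ l, ‖deriv (deriv ω) l‖ with ha2
  have ha0n : 0 ≤ a0 := integral_nonneg fun l => norm_nonneg _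
  have ha1n : 0 ≤ a1 := integral_nonneg fun l => norm_nonneg _
  have ha2n : 0 ≤ a2 := integral_nonneg fun l => norm_nonneg _
  set D0 : ℝ := M * a0 + M * (a2 + 2 * a1 + a0) with hD0
  have hD0n : 0 ≤ D0 := by positivity
  refine ⟨2 * π ^ 2 * D0, ?_⟩
  intro x hx φ hφ hφb
  obtain ⟨hφd, hφ1⟩ := derivs_of_contDiff2 hφ
  have hφd' : Differentiable ℝ (deriv φ) := hφ1.differentiable one_ne_zero
  -- vanishing of ω and its derivatives on the negative axis
  have hω0 : ∀ l : ℝ, l < 0 → ω l = 0 := by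
    intro l hl
    by_contra h
    exact absurd (hωsupp h) (by simpa using hl)
  have hω'0 : ∀ l : ℝ, l < 0 → deriv ω l = 0 := by
    intro l hl
    have h : ω =ᶠ[nhds l] (fun _ => 0) := by
      filter_upwards [Iio_mem_nhds hl] with t ht using hω0 t ht
    rw [h.deriv_eq]; simp
  have hω''0 : ∀ l : ℝ, l < 0 → deriv (deriv ω) l = 0 := by
    intro l hl
    have h : deriv ω =ᶠ[nhds l] (fun _ => 0) := by
      filter_upwards [Iio_mem_nhds hl] with t ht using hω'0 t ht
    rw [h.deriv_eq]; simp
  have hωzero : ω 0 = 0 := by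
    have h : Set.EqOn ω 0 (Set.Iio 0) := fun l hl => hω0 l hl
    have h2 := h.closure hω.continuous continuous_const
    have : (0:ℝ) ∈ closure (Set.Iio (0:ℝ)) := by
      rw [closure_Iio]; exact Set.self_mem_Iic
    simpa using h2 this
  -- the product function
  set g : ℝ → ℂ := fun l => ω l * φ l with hgdef
  have hg : ContDiff ℝ 2 g := hω.mul hφ
  have hgc : HasCompactSupport g := hωc.mul_right
  have hgi : Integrable g := hg.continuous.integrable_of_hasCompactSupport hgc
  obtain ⟨hgd, hg1⟩ := derivs_of_contDiff2 hg
  have hgi2 : Integrable (deriv (deriv g)) :=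
    (hg1.continuous_deriv le_rfl).integrable_of_hasCompactSupport hgc.deriv.deriv
  -- second derivative formula
  have hdg : deriv g = fun l => deriv ω l * φ l + ω l * deriv φ l :=
    funext fun l => deriv_mul (hωd l) (hφd l)
  have hddg : ∀ l, deriv (deriv g) l =
      deriv (deriv ω) l * φ l + deriv ω l * deriv φ l
        + (deriv ω l * deriv φ l + ω l * deriv (deriv φ) l) := by
    intro l
    rw [hdg, deriv_fun_add (f := fun y => deriv ω y * φ y) (g := fun y => ω y * deriv φ y) ((hωd' l).mul (hφd l)) ((hωd l).mul (hφd' l)),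
      deriv_fun_mul (hωd' l) (hφd l), deriv_fun_mul (hωd l) (hφd' l)]
  -- L¹ bounds on g and g''
  have hI0 : (∫ l, ‖g l‖) ≤ M * a0 := by
    rw [ha0, ← integral_const_mul]
    refine integral_mono hgi.norm (hωi.norm.const_mul M) fun l => ?_
    rcases le_or_gt 0 l with hl | hl
    · have hb := (hφb l hl).1
      calc ‖g l‖ = ‖ω l‖ * ‖φ l‖ := norm_mul _ _
        _ ≤ ‖ω l‖ * M := mul_le_mul_of_nonneg_left hb (norm_nonneg _)
        _ = M * ‖ω l‖ := mul_comm _ _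
    · simp [hgdef, hω0 l hl]
  have hI2 : (∫ l, ‖deriv (deriv g) l‖) ≤ M * (a2 + 2 * a1 + a0) := by
    have hrhs : Integrable (fun l =>
        M * ‖deriv (deriv ω) l‖ + M * ‖deriv ω l‖ + (M * ‖deriv ω l‖ + M * ‖ω l‖)) :=
      ((hω''i.norm.const_mul M).add (hω'i.norm.const_mul M)).add
        ((hω'i.norm.const_mul M).add (hωi.norm.const_mul M))
    have hmono : (∫ l, ‖deriv (deriv g) l‖) ≤
        ∫ l, (M * ‖deriv (deriv ω) l‖ + M * ‖deriv ω l‖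
          + (M * ‖deriv ω l‖ + M * ‖ω l‖)) := by
      refine integral_mono hgi2.norm hrhs fun l => ?_
      rw [hddg l]
      rcases le_or_gt 0 l with hl | hl
      · obtain ⟨hb0, hb1, hb2⟩ := hφb l hl
        refine (norm_add_le _ _).trans ?_
        have t1 : ‖deriv (deriv ω) l * φ l + deriv ω l * deriv φ l‖
            ≤ M * ‖deriv (deriv ω) l‖ + M * ‖deriv ω l‖ := by
          refine (norm_add_le _ _).trans ?_
          gcongr
          · rw [norm_mul]; exact (mul_le_mul_of_nonneg_left hb0 (norm_nonneg _)).trans_eq (mul_comm _ _)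
          · rw [norm_mul]; exact (mul_le_mul_of_nonneg_left hb1 (norm_nonneg _)).trans_eq (mul_comm _ _)
        have t2 : ‖deriv ω l * deriv φ l + ω l * deriv (deriv φ) l‖
            ≤ M * ‖deriv ω l‖ + M * ‖ω l‖ := by
          refine (norm_add_le _ _).trans ?_
          gcongr
          · rw [norm_mul]; exact (mul_le_mul_of_nonneg_left hb1 (norm_nonneg _)).trans_eq (mul_comm _ _)
          · rw [norm_mul]; exact (mul_le_mul_of_nonneg_left hb2 (norm_nonneg _)).trans_eq (mul_comm _ _)
        linarith
      · simp [hω0 l hl, hω'0 l hl, hω''0 l hl]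
    refine hmono.trans_eq ?_
    have e1 : Integrable (fun l => M * ‖deriv (deriv ω) l‖) := hω''i.norm.const_mul M
    have e2 : Integrable (fun l => M * ‖deriv ω l‖) := hω'i.norm.const_mul M
    have e4 : Integrable (fun l => M * ‖ω l‖) := hωi.norm.const_mul M
    have e12 : Integrable (fun l => M * ‖deriv (deriv ω) l‖ + M * ‖deriv ω l‖) := e1.add e2
    have e34 : Integrable (fun l => M * ‖deriv ω l‖ + M * ‖ω l‖) := e2.add e4
    rw [integral_add e12 e34, integral_add e1 e2, integral_add e2 e4,
      integral_const_mul, integral_const_mul, integral_const_mul]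
    rw [ha0, ha1, ha2]; ring
  have hD : (∫ l, ‖g l‖) + (∫ l, ‖deriv (deriv g) l‖) ≤ D0 := by
    rw [hD0]; linarith
  -- representation of the inner integral
  have hint : ∀ θ : ℝ, Integrable (fun l => Complex.exp ((θ * l : ℝ) * Complex.I) * g l) := by
    intro θ
    apply Continuous.integrable_of_hasCompactSupport
    · exact (Complex.continuous_exp.comp (by fun_prop)).mul hg.continuous
    · exact hgc.mul_left
  have hFrep : ∀ u : ℝ, (∫ lam in Set.Ioi (0:ℝ),
        ((Real.cos (u * lam) : ℝ) : ℂ) * Complex.exp (Complex.I * (x : ℂ) * (lam : ℂ)) *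
          ω lam * φ lam)
      = (1/2 : ℂ) * (𝓕 g (-((x + u) / (2 * π))) + 𝓕 g (-((x - u) / (2 * π)))) := by
    intro u
    rw [setIntegral_eq_integral_of_forall_compl_eq_zero (fun l hl => ?_)]
    swap
    · have hl' : l ≤ 0 := not_lt.mp (fun h => hl h)
      have : ω l = 0 := by
        rcases lt_or_eq_of_le hl' with h | h
        · exact hω0 l h
        · rw [h]; exact hωzero
      rw [this]; ring
    calc (∫ l : ℝ, ((Real.cos (u * l) : ℝ) : ℂ) *
            Complex.exp (Complex.I * (x : ℂ) * (l : ℂ)) * ω l * φ l)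
        = ∫ l : ℝ, (1/2 : ℂ) * (Complex.exp (((x + u) * l : ℝ) * Complex.I) * g l
            + Complex.exp (((x - u) * l : ℝ) * Complex.I) * g l) := by
          congr 1; funext l
          rw [mul_assoc, show ω l * φ l = g l from rfl, exp_cos_split u x l]; ring
      _ = (1/2 : ℂ) * ((∫ l : ℝ, Complex.exp (((x + u) * l : ℝ) * Complex.I) * g l)
            + ∫ l : ℝ, Complex.exp (((x - u) * l : ℝ) * Complex.I) * g l) := by
          rw [integral_const_mul, integral_add (hint (x + u)) (hint (x - u))]
      _ = (1/2 : ℂ) * (𝓕 g (-((x + u) / (2 * π))) + 𝓕 g (-((x - u) / (2 * π)))) := by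
          rw [fourier_rep g (x + u), fourier_rep g (x - u)]
  -- the integrable majorant
  set ψ : ℝ → ℝ := fun v => (1 + (v / (2 * π)) ^ 2)⁻¹ with hψdef
  have hψeq : ψ = fun v => (1 + (v * (2 * π)⁻¹) ^ 2)⁻¹ := by
    funext v; simp only [hψdef, div_eq_mul_inv]
  have h2πne : ((2 * π)⁻¹ : ℝ) ≠ 0 := inv_ne_zero (by positivity)
  have hψint : Integrable ψ := by
    rw [hψeq]; exact integrable_inv_one_add_sq.comp_mul_right' h2πne
  have hψval : (∫ v, ψ v) = 2 * π ^ 2 := by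
    rw [hψeq, MeasureTheory.Measure.integral_comp_mul_right (fun t : ℝ => (1 + t ^ 2)⁻¹) ((2 * π)⁻¹),
      integral_univ_inv_one_add_sq]
    rw [inv_inv, smul_eq_mul, abs_of_pos (by positivity : (0:ℝ) < 2 * π)]
    ring
  -- pointwise bound on the Fourier transform
  have hFb : ∀ θ : ℝ, ‖𝓕 g (-(θ / (2 * π)))‖ ≤ D0 * ψ θ := by
    intro θ
    have h := fourier_decay hg hgc (-(θ / (2 * π)))
    rw [show (-(θ / (2 * π))) ^ 2 = (θ / (2 * π)) ^ 2 by ring] at h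
    have h1p : (0:ℝ) < 1 + (θ / (2 * π)) ^ 2 := by positivity
    have hle : ‖𝓕 g (-(θ / (2 * π)))‖
        ≤ ((∫ l, ‖g l‖) + ∫ l, ‖deriv (deriv g) l‖) * (1 + (θ / (2 * π)) ^ 2)⁻¹ := by
      rw [← div_eq_mul_inv, le_div_iff₀ h1p]
      calc ‖𝓕 g (-(θ / (2 * π)))‖ * (1 + (θ / (2 * π)) ^ 2)
          = (1 + (θ / (2 * π)) ^ 2) * ‖𝓕 g (-(θ / (2 * π)))‖ := mul_comm _ _
        _ ≤ _ := h
    refine hle.trans ?_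
    rw [hψdef]
    exact mul_le_mul_of_nonneg_right hD (by positivity)
  -- integrability of the majorant
  have hmaj : Integrable (fun u => D0 / 2 * (ψ (x + u) + ψ (x - u))) :=
    (((hψint.comp_add_left x).add (hψint.comp_sub_left x)).const_mul _)
  -- final estimate
  have hfinal : (∫ u : ℝ, ‖∫ lam in Set.Ioi (0:ℝ),
        ((Real.cos (u * lam) : ℝ) : ℂ) * Complex.exp (Complex.I * (x : ℂ) * (lam : ℂ)) *
          ω lam * φ lam‖) ≤ 2 * π ^ 2 * D0 := by
    have step1 : (∫ u : ℝ, ‖∫ lam in Set.Ioi (0:ℝ),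
          ((Real.cos (u * lam) : ℝ) : ℂ) * Complex.exp (Complex.I * (x : ℂ) * (lam : ℂ)) *
            ω lam * φ lam‖)
        ≤ ∫ u : ℝ, D0 / 2 * (ψ (x + u) + ψ (x - u)) := by
      refine integral_mono_of_nonneg (Filter.Eventually.of_forall fun u => norm_nonneg _)
        hmaj (Filter.Eventually.of_forall fun u => ?_)
      dsimp only
      rw [hFrep u, norm_mul]
      have h12 : ‖(1/2 : ℂ)‖ = 1/2 := by norm_num
      rw [h12]
      refine le_trans (mul_le_mul_of_nonneg_left (norm_add_le _ _) (by norm_num)) ?_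
      have b1 := hFb (x + u)
      have b2 := hFb (x - u)
      nlinarith [b1, b2]
    refine step1.trans ?_
    have hA : Integrable (fun u => ψ (x + u)) := hψint.comp_add_left x
    have hB : Integrable (fun u => ψ (x - u)) := hψint.comp_sub_left x
    rw [integral_const_mul, integral_add hA hB,
      integral_add_left_eq_self ψ x, integral_sub_left_eq_self ψ volume x, hψval]
    exact le_of_eq (by ring)
  refine hfinal.trans ?_
  have h1s : (1:ℝ) ≤ Real.sqrt (1 + x ^ 2) := by
    have h := Real.sqrt_le_sqrt (show (1:ℝ) ≤ 1 + x ^ 2 by nlinarith)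
    rwa [Real.sqrt_one] at h
  have hC : (0:ℝ) ≤ 2 * π ^ 2 * D0 := by positivity
  nlinarith [mul_le_mul_of_nonneg_left h1s hC]
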